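/- arXiv:1312.1930 — 2 statements merged into one kernel-verified Lean document; each statement's English description precedes it below -/
import Mathlib

section
/- For every real number r with -1/2 ≤ r ≤ 1/2, there exists exactly one z ∈ ℍ with Im z > 0.95, E₂(z) ≠ 0, and h(z) = r. In particular, h takes every rational value in [-1/2, 1/2] exactly once in this region. -/
open Complex Real

/-- The weight 2 Eisenstein series `E₂(z) = 1 - 24 ∑_{n≥1} σ₁(n) e^{2πinz}`. -/
noncomputable def E₂ (z : ℂ) : ℂ :=
  1 - 24 * ∑' n : ℕ, (ArithmeticFunction.sigma 1 (n + 1) : ℂ) *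
    Complex.exp (2 * (Real.pi : ℂ) * Complex.I * ((n : ℂ) + 1) * z)

/-- The equivariant function `h(z) = z + (6/(πi))/E₂(z)`. -/
noncomputable def h (z : ℂ) : ℂ := z + (6 / ((Real.pi : ℂ) * Complex.I)) / E₂ z

noncomputable def fE (n : ℕ) (z : ℂ) : ℂ :=
  (ArithmeticFunction.sigma 1 (n + 1) : ℂ) *
    Complex.exp (2 * (Real.pi : ℂ) * Complex.I * ((n : ℂ) + 1) * z)

lemma sigma_le (n : ℕ) : (ArithmeticFunction.sigma 1 (n+1) : ℝ) ≤ ((n:ℝ)+1)^2 := by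
  have h1 : ArithmeticFunction.sigma 1 (n+1) ≤ (n+1)^2 := by
    rw [ArithmeticFunction.sigma_apply]
    calc ∑ d ∈ (n+1).divisors, d ^ 1 ≤ ∑ _d ∈ (n+1).divisors, (n+1) := by
          refine Finset.sum_le_sum fun d hd => ?_
          simpa using Nat.divisor_le hd
      _ = (n+1).divisors.card * (n+1) := by rw [Finset.sum_const, smul_eq_mul]
      _ ≤ (n+1) * (n+1) := by
          have : (n+1).divisors ⊆ Finset.Icc 1 (n+1) := by
            intro d hd
            rw [Nat.mem_divisors] at hd
            simp [Nat.one_le_iff_ne_zero.2 (Nat.pos_of_dvd_of_pos hd.1 (Nat.succ_pos n)).ne',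
              Nat.le_of_dvd (Nat.succ_pos n) hd.1]
          have := Finset.card_le_card this
          simpa [Nat.card_Icc] using Nat.mul_le_mul_right (n+1) (this.trans (by simp [Nat.card_Icc]))
      _ = (n+1)^2 := by ring
  calc (ArithmeticFunction.sigma 1 (n+1) : ℝ) ≤ ((n+1)^2 : ℕ) := by exact_mod_cast h1
    _ = ((n:ℝ)+1)^2 := by push_cast; ring

lemma re_term (n : ℕ) (z : ℂ) :
    (2 * (Real.pi : ℂ) * Complex.I * ((n : ℂ) + 1) * z).re = -(2*Real.pi*((n:ℝ)+1)*z.im) := by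
  have : 2 * (Real.pi : ℂ) * Complex.I * ((n : ℂ) + 1) * z
      = ((2*Real.pi*((n:ℝ)+1) : ℝ) : ℂ) * (Complex.I * z) := by
    push_cast; ring
  rw [this, Complex.re_ofReal_mul]
  simp [mul_comm]

lemma norm_exp_term (n : ℕ) (z : ℂ) :
    ‖Complex.exp (2 * (Real.pi : ℂ) * Complex.I * ((n : ℂ) + 1) * z)‖
      = Real.exp (-(2*Real.pi*z.im)) ^ (n+1) := by
  rw [Complex.norm_exp, re_term, ← Real.exp_nat_mul]
  congr 1
  push_cast; ring

lemma sq_le_pow4 (n : ℕ) : ((n:ℝ)+1)^2 ≤ 4^n := by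
  induction n with
  | zero => norm_num
  | succ k ih =>
    push_cast
    push_cast at ih
    have hk : (0:ℝ) ≤ (k:ℝ) := k.cast_nonneg
    have h4 : (4:ℝ)^(k+1) = 4*4^k := pow_succ' 4 k
    nlinarith [pow_nonneg (by norm_num : (0:ℝ) ≤ 4) k]

lemma cube_le_pow8 (n : ℕ) : ((n:ℝ)+1)^3 ≤ 8^n := by
  induction n with
  | zero => norm_num
  | succ k ih =>
    push_cast
    push_cast at ih
    have hk : (0:ℝ) ≤ (k:ℝ) := k.cast_nonneg
    have h8 : (8:ℝ)^(k+1) = 8*8^k := by rw [pow_succ]; ring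
    nlinarith [pow_nonneg (by norm_num : (0:ℝ) ≤ 8) k, sq_nonneg ((k:ℝ)), mul_nonneg hk hk,
      mul_nonneg (mul_nonneg hk hk) hk]

section Bounds
variable {c x : ℝ} (hx : Real.exp (-(2*Real.pi*c)) ≤ x) {z : ℂ} (hz : c ≤ z.im)

include hx hz in
lemma norm_fE_le (n : ℕ) : ‖fE n z‖ ≤ x * (4*x)^n := by
  have hx0 : 0 < x := lt_of_lt_of_le (Real.exp_pos _) hx
  have hexp : Real.exp (-(2*Real.pi*z.im)) ≤ x := by
    refine le_trans (Real.exp_le_exp.2 ?_) hx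
    have := Real.pi_pos
    nlinarith
  have hσ : ‖((ArithmeticFunction.sigma 1 (n+1) : ℕ) : ℂ)‖ ≤ ((n:ℝ)+1)^2 := by
    rw [Complex.norm_natCast]; exact sigma_le n
  have h1 : ‖fE n z‖ ≤ ((n:ℝ)+1)^2 * x^(n+1) := by
    rw [fE, norm_mul, norm_exp_term]
    exact mul_le_mul hσ (pow_le_pow_left₀ (Real.exp_pos _).le hexp _)
      (by positivity) (by positivity)
  calc ‖fE n z‖ ≤ ((n:ℝ)+1)^2 * x^(n+1) := h1
    _ ≤ 4^n * x^(n+1) := by gcongr; exact sq_le_pow4 n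
    _ = x * (4*x)^n := by rw [mul_pow, pow_succ]; ring

include hx hz in
lemma summable_fE (h4 : 4*x < 1) : Summable (fun n => fE n z) := by
  have hx0 : 0 < x := lt_of_lt_of_le (Real.exp_pos _) hx
  exact Summable.of_norm_bounded ((summable_geometric_of_lt_one (by positivity) h4).mul_left x)
    (norm_fE_le hx hz)

include hx hz in
lemma norm_tsum_fE_le (h4 : 4*x < 1) : ‖∑' n, fE n z‖ ≤ x * (1-4*x)⁻¹ := by
  have hx0 : 0 < x := lt_of_lt_of_le (Real.exp_pos _) hx
  have hg : Summable (fun n : ℕ => x * (4*x)^n) :=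
    (summable_geometric_of_lt_one (by positivity) h4).mul_left x
  have hns : Summable (fun n => ‖fE n z‖) :=
    Summable.of_nonneg_of_le (fun n => norm_nonneg _) (norm_fE_le hx hz) hg
  calc ‖∑' n, fE n z‖ ≤ ∑' n, ‖fE n z‖ := norm_tsum_le_tsum_norm hns
    _ ≤ ∑' n : ℕ, x * (4*x)^n := Summable.tsum_le_tsum (norm_fE_le hx hz) hns hg
    _ = x * (1-4*x)⁻¹ := by
        rw [tsum_mul_left, tsum_geometric_of_lt_one (by positivity) h4]

include hx hz in
lemma norm_E₂_sub_one_le (h4 : 4*x < 1) : ‖E₂ z - 1‖ ≤ 24 * (x * (1-4*x)⁻¹) := by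
  have : E₂ z - 1 = -(24 * ∑' n, fE n z) := by rw [E₂]; unfold fE; ring
  rw [this, norm_neg, norm_mul, Complex.norm_ofNat]
  exact mul_le_mul_of_nonneg_left (norm_tsum_fE_le hx hz h4) (by norm_num)

end Bounds

section Lip
variable {c x : ℝ} (hx : Real.exp (-(2*Real.pi*c)) ≤ x) {z w : ℂ}
  (hz : c ≤ z.im) (hw : c ≤ w.im)

include hx hz hw in
lemma exp_diff_le (n : ℕ) :
    ‖Complex.exp (2*(Real.pi:ℂ)*Complex.I*((n:ℂ)+1)*z)
      - Complex.exp (2*(Real.pi:ℂ)*Complex.I*((n:ℂ)+1)*w)‖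
      ≤ 4*Real.pi*((n:ℝ)+1) * x^(n+1) * ‖z - w‖ := by
  have hx0 : 0 < x := lt_of_lt_of_le (Real.exp_pos _) hx
  have hpi := Real.pi_pos
  set a := 2*(Real.pi:ℂ)*Complex.I*((n:ℂ)+1)*z with ha
  set b := 2*(Real.pi:ℂ)*Complex.I*((n:ℂ)+1)*w with hb
  have hd : ‖a - b‖ = 2*Real.pi*((n:ℝ)+1)*‖z-w‖ := by
    have : a - b = ((2*Real.pi*((n:ℝ)+1) : ℝ) : ℂ) * (Complex.I * (z - w)) := by
      rw [ha, hb]; push_cast; ring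
    rw [this, norm_mul, norm_mul, Complex.norm_real, Complex.norm_I, one_mul]
    rw [Real.norm_eq_abs, abs_of_pos (by positivity)]
  have hea : ‖Complex.exp a‖ ≤ x^(n+1) := by
    rw [ha, norm_exp_term]
    refine pow_le_pow_left₀ (Real.exp_pos _).le ?_ _
    refine le_trans (Real.exp_le_exp.2 (by nlinarith)) hx
  have heb : ‖Complex.exp b‖ ≤ x^(n+1) := by
    rw [hb, norm_exp_term]
    refine pow_le_pow_left₀ (Real.exp_pos _).le ?_ _
    refine le_trans (Real.exp_le_exp.2 (by nlinarith)) hx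
  have hxp : (0:ℝ) ≤ x^(n+1) := by positivity
  by_cases hcase : ‖a - b‖ ≤ 1
  · have key : Complex.exp a - Complex.exp b = Complex.exp b * (Complex.exp (a-b) - 1) := by
      rw [mul_sub, ← Complex.exp_add, mul_one]; ring_nf
    rw [key, norm_mul]
    have h1 : ‖Complex.exp (a-b) - 1‖ ≤ 2*‖a-b‖ := by
      have := Complex.norm_exp_sub_one_le (x := a - b) hcase
      simpa using this
    calc ‖Complex.exp b‖ * ‖Complex.exp (a-b) - 1‖ ≤ x^(n+1) * (2*‖a-b‖) :=
          mul_le_mul heb h1 (norm_nonneg _) hxp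
      _ = 4*Real.pi*((n:ℝ)+1) * x^(n+1) * ‖z-w‖ := by rw [hd]; ring
  · push_neg at hcase
    calc ‖Complex.exp a - Complex.exp b‖ ≤ ‖Complex.exp a‖ + ‖Complex.exp b‖ := norm_sub_le _ _
      _ ≤ 2 * x^(n+1) := by linarith
      _ ≤ 2 * x^(n+1) * ‖a - b‖ := le_mul_of_one_le_right (by positivity) hcase.le
      _ = 4*Real.pi*((n:ℝ)+1) * x^(n+1) * ‖z-w‖ := by rw [hd]; ring

include hx hz hw in
lemma norm_fE_diff_le (n : ℕ) :
    ‖fE n z - fE n w‖ ≤ 4*Real.pi*x*‖z-w‖ * (8*x)^n := by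
  have hx0 : 0 < x := lt_of_lt_of_le (Real.exp_pos _) hx
  have hpi := Real.pi_pos
  have key : fE n z - fE n w = (ArithmeticFunction.sigma 1 (n+1) : ℂ) *
      (Complex.exp (2*(Real.pi:ℂ)*Complex.I*((n:ℂ)+1)*z)
        - Complex.exp (2*(Real.pi:ℂ)*Complex.I*((n:ℂ)+1)*w)) := by
    rw [fE, fE]; ring
  rw [key, norm_mul]
  have hσ : ‖((ArithmeticFunction.sigma 1 (n+1) : ℕ) : ℂ)‖ ≤ ((n:ℝ)+1)^2 := by
    rw [Complex.norm_natCast]; exact sigma_le n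
  calc ‖((ArithmeticFunction.sigma 1 (n+1) : ℕ) : ℂ)‖ * _
      ≤ ((n:ℝ)+1)^2 * (4*Real.pi*((n:ℝ)+1) * x^(n+1) * ‖z - w‖) :=
        mul_le_mul hσ (exp_diff_le hx hz hw n) (norm_nonneg _) (by positivity)
    _ = ((n:ℝ)+1)^3 * (4*Real.pi * x^(n+1) * ‖z - w‖) := by ring
    _ ≤ 8^n * (4*Real.pi * x^(n+1) * ‖z - w‖) := by
        exact mul_le_mul_of_nonneg_right (cube_le_pow8 n) (by positivity)
    _ = 4*Real.pi*x*‖z-w‖ * (8*x)^n := by rw [mul_pow, pow_succ]; ring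

include hx hz hw in
lemma norm_E₂_diff_le (h8 : 8*x < 1) :
    ‖E₂ z - E₂ w‖ ≤ 96*Real.pi*(x*(1-8*x)⁻¹)*‖z-w‖ := by
  have hx0 : 0 < x := lt_of_lt_of_le (Real.exp_pos _) hx
  have hpi := Real.pi_pos
  have h4 : 4*x < 1 := by linarith
  have hsz := summable_fE hx hz h4
  have hsw := summable_fE hx hw h4
  have key : E₂ z - E₂ w = -(24 * ∑' n, (fE n z - fE n w)) := by
    rw [Summable.tsum_sub hsz hsw]
    show (1 - 24 * ∑' n, fE n z) - (1 - 24 * ∑' n, fE n w) = _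
    ring
  have hg : Summable (fun n : ℕ => 4*Real.pi*x*‖z-w‖ * (8*x)^n) :=
    (summable_geometric_of_lt_one (by positivity) h8).mul_left _
  have hns : Summable (fun n => ‖fE n z - fE n w‖) :=
    Summable.of_nonneg_of_le (fun n => norm_nonneg _) (norm_fE_diff_le hx hz hw) hg
  rw [key, norm_neg, norm_mul, Complex.norm_ofNat]
  calc 24 * ‖∑' n, (fE n z - fE n w)‖ ≤ 24 * ∑' n, ‖fE n z - fE n w‖ := by
        exact mul_le_mul_of_nonneg_left (norm_tsum_le_tsum_norm hns) (by norm_num)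
    _ ≤ 24 * ∑' n : ℕ, 4*Real.pi*x*‖z-w‖ * (8*x)^n := by
        exact mul_le_mul_of_nonneg_left
          (Summable.tsum_le_tsum (norm_fE_diff_le hx hz hw) hns hg) (by norm_num)
    _ = 96*Real.pi*(x*(1-8*x)⁻¹)*‖z-w‖ := by
        rw [tsum_mul_left, tsum_geometric_of_lt_one (by positivity) h8]
        ring

end Lip

lemma exp5_ge : (148.41:ℝ) ≤ Real.exp 5 := by
  have h := Real.exp_one_gt_d9
  have h5 : Real.exp 5 = Real.exp 1 ^ (5:ℕ) := by
    rw [← Real.exp_nat_mul]; norm_num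
  rw [h5]
  calc (148.41:ℝ) ≤ 2.7182818283^(5:ℕ) := by norm_num
    _ ≤ Real.exp 1 ^ (5:ℕ) := pow_le_pow_left₀ (by norm_num) h.le 5

lemma exp10_ge : (22026.4:ℝ) ≤ Real.exp 10 := by
  have h := Real.exp_one_gt_d9
  have h5 : Real.exp 10 = Real.exp 1 ^ (10:ℕ) := by
    rw [← Real.exp_nat_mul]; norm_num
  rw [h5]
  calc (22026.4:ℝ) ≤ 2.7182818283^(10:ℕ) := by norm_num
    _ ≤ Real.exp 1 ^ (10:ℕ) := pow_le_pow_left₀ (by norm_num) h.le 10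

lemma x1_bound : Real.exp (-(2*Real.pi*0.95)) ≤ 0.00343 := by
  have hpi : (3.141592:ℝ) < Real.pi := Real.pi_gt_d6
  have h1 : Real.exp (-(2*Real.pi*0.95)) ≤ Real.exp (-5.969) :=
    Real.exp_le_exp.2 (by nlinarith)
  refine h1.trans ?_
  rw [Real.exp_neg]
  have he : (291.6:ℝ) ≤ Real.exp 5.969 := by
    have : Real.exp 5.969 = Real.exp 5 * Real.exp 0.969 := by
      rw [← Real.exp_add]; norm_num
    rw [this]
    have h2 : (1.969:ℝ) ≤ Real.exp 0.969 := by
      have := Real.add_one_le_exp (0.969:ℝ); linarith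
    nlinarith [exp5_ge, Real.exp_pos (5:ℝ)]
  rw [inv_le_comm₀ (by positivity) (by norm_num)]
  linarith

lemma x2_bound : Real.exp (-(2*Real.pi*1.73)) ≤ 0.0000243 := by
  have hpi : (3.141592:ℝ) < Real.pi := Real.pi_gt_d6
  have h1 : Real.exp (-(2*Real.pi*1.73)) ≤ Real.exp (-10.869) :=
    Real.exp_le_exp.2 (by nlinarith)
  refine h1.trans ?_
  rw [Real.exp_neg]
  have he : (41160:ℝ) ≤ Real.exp 10.869 := by
    have : Real.exp 10.869 = Real.exp 10 * Real.exp 0.869 := by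
      rw [← Real.exp_add]; norm_num
    rw [this]
    have h2 : (1.869:ℝ) ≤ Real.exp 0.869 := by
      have := Real.add_one_le_exp (0.869:ℝ); linarith
    nlinarith [exp10_ge, Real.exp_pos (10:ℝ)]
  rw [inv_le_comm₀ (by positivity) (by norm_num)]
  linarith

noncomputable def gE (z : ℂ) : ℂ := (6 / ((Real.pi : ℂ) * Complex.I)) / E₂ z

lemma h_eq (z : ℂ) : h z = z + gE z := rfl

lemma gE_eq (z : ℂ) : gE z = ((6/Real.pi : ℝ) : ℂ) * (-Complex.I * (E₂ z)⁻¹) := by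
  have hπ : (Real.pi:ℂ) ≠ 0 := Complex.ofReal_ne_zero.2 Real.pi_ne_zero
  have hc : (6:ℂ) / ((Real.pi:ℂ) * Complex.I) = ((6/Real.pi : ℝ):ℂ) * (-Complex.I) := by
    rw [div_eq_iff (mul_ne_zero hπ Complex.I_ne_zero)]
    push_cast
    field_simp
    have : (6:ℂ) * Complex.I * ((Real.pi:ℂ) * Complex.I) = 6 * (Real.pi:ℂ) * (Complex.I*Complex.I) := by ring
    rw [sq, Complex.I_mul_I]
    ring
  rw [gE, div_eq_mul_inv, hc, mul_assoc]

lemma gE_re (z : ℂ) : (gE z).re = (6/Real.pi) * ((E₂ z)⁻¹).im := by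
  rw [gE_eq, Complex.re_ofReal_mul]
  simp

lemma gE_im (z : ℂ) : (gE z).im = -((6/Real.pi) * ((E₂ z)⁻¹).re) := by
  rw [gE_eq, Complex.im_ofReal_mul]
  simp

lemma inv_close {u : ℂ} {δ : ℝ} (hδ : δ < 1) (hu : ‖u - 1‖ ≤ δ) :
    1 - δ ≤ ‖u‖ ∧ u ≠ 0 ∧ ‖u⁻¹ - 1‖ ≤ δ/(1-δ) := by
  have hδ0 : 0 ≤ δ := (norm_nonneg _).trans hu
  have h1 : 1 - δ ≤ ‖u‖ := by
    have h2 := norm_sub_norm_le (1:ℂ) u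
    rw [norm_one, norm_sub_rev] at h2
    linarith
  have hu0 : u ≠ 0 := by
    intro h; rw [h, norm_zero] at h1; linarith
  refine ⟨h1, hu0, ?_⟩
  have key : u⁻¹ - 1 = (1 - u) * u⁻¹ := by field_simp
  rw [key, norm_mul, norm_inv, norm_sub_rev]
  rw [← div_eq_mul_inv]
  exact div_le_div₀ hδ0 hu (by linarith) h1

lemma regA {z : ℂ} (hz : (0.95:ℝ) ≤ z.im) :
    E₂ z ≠ 0 ∧ ‖(E₂ z)⁻¹ - 1‖ ≤ 0.0912 := by
  have h1 : ‖E₂ z - 1‖ ≤ 0.0835 := by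
    refine (norm_E₂_sub_one_le x1_bound hz (by norm_num)).trans (by norm_num)
  obtain ⟨-, h2, h3⟩ := inv_close (by norm_num : (0.0835:ℝ) < 1) h1
  exact ⟨h2, h3.trans (by norm_num)⟩

lemma regB {z : ℂ} (hz : (1.73:ℝ) ≤ z.im) :
    (0.999:ℝ) ≤ ‖E₂ z‖ ∧ E₂ z ≠ 0 ∧ ‖(E₂ z)⁻¹ - 1‖ ≤ 0.000585 := by
  have h1 : ‖E₂ z - 1‖ ≤ 0.000584 := by
    refine (norm_E₂_sub_one_le x2_bound hz (by norm_num)).trans (by norm_num)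
  obtain ⟨h0, h2, h3⟩ := inv_close (by norm_num : (0.000584:ℝ) < 1) h1
  exact ⟨by linarith, h2, h3.trans (by norm_num)⟩

lemma norm_const_gE : ‖(6:ℂ) / ((Real.pi:ℂ) * Complex.I)‖ = 6/Real.pi := by
  rw [norm_div, norm_mul, Complex.norm_I, mul_one]
  norm_num [Complex.norm_real, Real.norm_eq_abs, abs_of_pos Real.pi_pos]

lemma gE_lip {z w : ℂ} (hz : (1.73:ℝ) ≤ z.im) (hw : (1.73:ℝ) ≤ w.im) :
    ‖gE z - gE w‖ ≤ 0.05 * ‖z - w‖ := by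
  obtain ⟨hz0, hzne, -⟩ := regB hz
  obtain ⟨hw0, hwne, -⟩ := regB hw
  have hLE : ‖E₂ z - E₂ w‖ ≤ 0.0074 * ‖z - w‖ := by
    refine (norm_E₂_diff_le x2_bound hz hw (by norm_num)).trans ?_
    have hπ' : Real.pi < 3.141593 := Real.pi_lt_d6
    have hc : (0.0000243:ℝ)*(1-8*0.0000243)⁻¹ ≤ 0.0000244 := by norm_num
    have hnn : (0:ℝ) ≤ ‖z - w‖ := norm_nonneg _
    nlinarith [Real.pi_pos]
  have key : gE z - gE w = (6 / ((Real.pi:ℂ) * Complex.I)) * ((E₂ z)⁻¹ - (E₂ w)⁻¹) := by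
    simp only [gE, div_eq_mul_inv]; ring
  rw [key, norm_mul, norm_const_gE]
  have hinv : ‖(E₂ z)⁻¹ - (E₂ w)⁻¹‖ ≤ (0.0074 * ‖z - w‖)/(0.999*0.999) := by
    rw [inv_sub_inv hzne hwne, norm_div, norm_mul]
    have hnum : ‖E₂ w - E₂ z‖ ≤ 0.0074 * ‖z - w‖ := by
      rw [norm_sub_rev]; exact hLE
    exact div_le_div₀ (by positivity) hnum (by norm_num)
      (mul_le_mul hz0 hw0 (by norm_num) (norm_nonneg _))
  calc 6/Real.pi * ‖(E₂ z)⁻¹ - (E₂ w)⁻¹‖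
      ≤ 6/Real.pi * ((0.0074 * ‖z - w‖)/(0.999*0.999)) := by
        exact mul_le_mul_of_nonneg_left hinv (by positivity)
    _ ≤ 1.90986 * ((0.0074 * ‖z - w‖)/(0.999*0.999)) := by
        have h6 : 6/Real.pi ≤ 1.90986 := by
          rw [div_le_iff₀ Real.pi_pos]; nlinarith [Real.pi_gt_d6]
        exact mul_le_mul_of_nonneg_right h6 (by positivity)
    _ = (1.90986 * 0.0074 / (0.999*0.999)) * ‖z - w‖ := by ring
    _ ≤ 0.05 * ‖z - w‖ := mul_le_mul_of_nonneg_right (by norm_num) (norm_nonneg _)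

lemma re_close {z : ℂ} {ε : ℝ} (hε : ‖(E₂ z)⁻¹ - 1‖ ≤ ε) :
    |((E₂ z)⁻¹).re - 1| ≤ ε ∧ |((E₂ z)⁻¹).im| ≤ ε := by
  constructor
  · have h1 := Complex.abs_re_le_norm ((E₂ z)⁻¹ - 1)
    simpa [Complex.sub_re] using h1.trans hε
  · have h1 := Complex.abs_im_le_norm ((E₂ z)⁻¹ - 1)
    simpa [Complex.sub_im] using h1.trans hε

lemma loc {r : ℝ} {z : ℂ} (hz : (0.95:ℝ) ≤ z.im) (hE : E₂ z ≠ 0) (hh : h z = (r:ℂ)) :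
    (1.73:ℝ) ≤ z.im := by
  obtain ⟨-, hinv⟩ := regA hz
  obtain ⟨hre, -⟩ := re_close hinv
  have him : z.im + (gE z).im = 0 := by
    have := congrArg Complex.im hh
    simpa [h_eq, Complex.add_im, Complex.ofReal_im] using this
  rw [gE_im] at him
  have h6 : (1.909:ℝ) ≤ 6/Real.pi := by
    rw [le_div_iff₀ Real.pi_pos]; nlinarith [Real.pi_lt_d6]
  have hre' : (0.9088:ℝ) ≤ ((E₂ z)⁻¹).re := by
    rw [abs_le] at hre; linarith
  have := mul_le_mul h6 hre' (by norm_num) (by positivity)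
  nlinarith

/-- h takes every real value in [-1/2, 1/2] exactly once in the region
Im z > 0.95. -/
theorem stmt_8 (r : ℝ) (hr₁ : -(1 / 2) ≤ r) (hr₂ : r ≤ 1 / 2) :
    ∃! z : ℂ, 0.95 < z.im ∧ E₂ z ≠ 0 ∧ h z = (r : ℂ) := by
  set S : Set ℂ := Complex.re ⁻¹' (Set.Icc (-0.68) 0.68) ∩
    Complex.im ⁻¹' (Set.Icc 1.73 2.09) with hS
  have hSc : IsClosed S :=
    (isClosed_Icc.preimage Complex.continuous_re).inter
      (isClosed_Icc.preimage Complex.continuous_im)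
  haveI : CompleteSpace S := hSc.completeSpace_coe
  haveI : Nonempty S := ⟨⟨Complex.I * 1.9, by
    constructor
    · show (Complex.I * 1.9).re ∈ Set.Icc (-0.68:ℝ) 0.68
      simp [Set.mem_Icc]; norm_num
    · show (Complex.I * 1.9).im ∈ Set.Icc (1.73:ℝ) 2.09
      simp [Set.mem_Icc]; norm_num⟩⟩
  have h6u : 6/Real.pi ≤ 1.90986 := by
    rw [div_le_iff₀ Real.pi_pos]; nlinarith [Real.pi_gt_d6]
  have h6l : (1.909:ℝ) ≤ 6/Real.pi := by
    rw [le_div_iff₀ Real.pi_pos]; nlinarith [Real.pi_lt_d6]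
  have hmap : ∀ z : ℂ, (1.73:ℝ) ≤ z.im → ((r:ℂ) - gE z) ∈ S := by
    intro z hz
    obtain ⟨-, -, hinv⟩ := regB hz
    obtain ⟨hre, him⟩ := re_close hinv
    rw [abs_le] at hre him
    have ha0 : (0:ℝ) ≤ 6/Real.pi := by positivity
    have hp1 : (6/Real.pi) * ((E₂ z)⁻¹).im ≤ (6/Real.pi) * 0.000585 :=
      mul_le_mul_of_nonneg_left him.2 ha0
    have hp2 : (6/Real.pi) * (-0.000585) ≤ (6/Real.pi) * ((E₂ z)⁻¹).im :=
      mul_le_mul_of_nonneg_left him.1 ha0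
    have hu1 : (0.999415:ℝ) ≤ ((E₂ z)⁻¹).re := by linarith
    have hu2 : ((E₂ z)⁻¹).re ≤ 1.000585 := by linarith
    have hA : (6/Real.pi) * ((E₂ z)⁻¹).re ≤ 1.90986 * 1.000585 :=
      mul_le_mul h6u hu2 (by linarith) (by norm_num)
    have hB : (1.909:ℝ) * 0.999415 ≤ (6/Real.pi) * ((E₂ z)⁻¹).re :=
      mul_le_mul h6l hu1 (by norm_num) ha0
    constructor
    · show ((r:ℂ) - gE z).re ∈ Set.Icc (-0.68:ℝ) 0.68
      rw [Set.mem_Icc, Complex.sub_re, Complex.ofReal_re, gE_re]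
      constructor <;> nlinarith
    · show ((r:ℂ) - gE z).im ∈ Set.Icc (1.73:ℝ) 2.09
      rw [Set.mem_Icc, Complex.sub_im, Complex.ofReal_im, gE_im]
      constructor <;> nlinarith
  let F : S → S := fun zs => ⟨(r:ℂ) - gE zs.1, hmap zs.1 zs.2.2.1⟩
  have hcontr : ContractingWith (1/2 : NNReal) F := by
    constructor
    · rw [← NNReal.coe_lt_coe]; push_cast; norm_num
    · refine LipschitzWith.of_dist_le_mul fun a b => ?_
      rw [Subtype.dist_eq, Subtype.dist_eq, dist_eq_norm, dist_eq_norm]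
      show ‖(r:ℂ) - gE a.1 - ((r:ℂ) - gE b.1)‖ ≤ _
      have e : (r:ℂ) - gE a.1 - ((r:ℂ) - gE b.1) = -(gE a.1 - gE b.1) := by ring
      rw [e, norm_neg]
      refine (gE_lip a.2.2.1 b.2.2.1).trans ?_
      have hc : ((1/2 : NNReal) : ℝ) = 1/2 := by push_cast; norm_num
      rw [hc]
      exact mul_le_mul_of_nonneg_right (by norm_num) (norm_nonneg _)
  let zfix : S := ContractingWith.fixedPoint F hcontr
  have hfix : F zfix = zfix := hcontr.fixedPoint_isFixedPt
  have hz1 : (r:ℂ) - gE (zfix : ℂ) = (zfix : ℂ) := congrArg Subtype.val hfix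
  have hzim : (1.73:ℝ) ≤ (zfix : ℂ).im := zfix.2.2.1
  have hEz : E₂ (zfix : ℂ) ≠ 0 := (regB hzim).2.1
  have hhz : h (zfix : ℂ) = (r:ℂ) := by
    rw [h_eq]; linear_combination -hz1
  refine ⟨(zfix : ℂ), ⟨by norm_num at hzim ⊢; linarith, hEz, hhz⟩, ?_⟩
  rintro y ⟨hy1, hy2, hy3⟩
  have hyim : (1.73:ℝ) ≤ y.im := loc (by norm_num at hy1 ⊢; linarith) hy2 hy3
  have hy4 : (r:ℂ) - gE y = y := by
    rw [h_eq] at hy3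
    linear_combination -hy3
  have hdiff : y - (zfix : ℂ) = -(gE y - gE (zfix : ℂ)) := by
    linear_combination hz1 - hy4
  have hle : ‖y - (zfix : ℂ)‖ ≤ 0.05 * ‖y - (zfix : ℂ)‖ := by
    calc ‖y - (zfix : ℂ)‖ = ‖gE y - gE (zfix : ℂ)‖ := by rw [hdiff, norm_neg]
      _ ≤ 0.05 * ‖y - (zfix : ℂ)‖ := gE_lip hyim hzim
  have h0 : ‖y - (zfix : ℂ)‖ = 0 := by
    have := norm_nonneg (y - (zfix : ℂ)); linarith
  exact sub_eq_zero.1 (norm_eq_zero.1 h0)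
end

section
/- For every z ∈ ℍ with Im z ≥ 0.95, one has |E₂(z) - 1| ≤ 0.07; in particular E₂(z) ≠ 0 whenever Im z ≥ 0.95. -/
open Complex Real

lemma sigma_le_sq (m : ℕ) : ArithmeticFunction.sigma 1 m ≤ m * m := by
  rw [ArithmeticFunction.sigma_one_apply]
  calc ∑ d ∈ m.divisors, d ≤ ∑ _d ∈ m.divisors, m :=
        Finset.sum_le_sum fun d hd => Nat.divisor_le hd
    _ = m.divisors.card * m := by rw [Finset.sum_const, smul_eq_mul]
    _ ≤ m * m := by
        gcongr
        have hsub : m.divisors ⊆ Finset.Icc 1 m := fun d hd =>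
          Finset.mem_Icc.2 ⟨Nat.pos_of_mem_divisors hd, Nat.divisor_le hd⟩
        calc m.divisors.card ≤ (Finset.Icc 1 m).card := Finset.card_le_card hsub
          _ = m := by simp

lemma sq_le_pow (n : ℕ) : ((n : ℝ) + 2) ^ 2 ≤ 8 * 2 ^ n := by
  induction n with
  | zero => norm_num
  | succ k ih =>
    have h2 : (k : ℝ) + 1 ≤ 2 ^ k := by exact_mod_cast Nat.lt_two_pow_self (n := k)
    have h3 : (2 : ℝ) ^ (k + 1) = 2 * 2 ^ k := pow_succ' 2 k
    push_cast
    rw [h3]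
    nlinarith [ih, h2]

/-- |E₂(z) - 1| ≤ 0.07 for Im z ≥ 0.95; in particular E₂(z) ≠ 0 there. -/
theorem stmt_13 (z : ℂ) (hz : 0.95 ≤ z.im) :
    ‖E₂ z - 1‖ ≤ 0.07 ∧ E₂ z ≠ 0 := by
  set r : ℝ := Real.exp (-(2 * Real.pi * z.im)) with hrdef
  have hπ := Real.pi_gt_d6
  have hr0 : 0 < r := Real.exp_pos _
  -- r ≤ 0.0027
  have hexp6 : Real.exp 5.95 = Real.exp 1 ^ (6 : ℕ) * Real.exp (-0.05) := by
    rw [← Real.exp_nat_mul, ← Real.exp_add]; norm_num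
  have he1 := Real.exp_one_gt_d9
  have he2 : (0.95 : ℝ) ≤ Real.exp (-0.05) := by
    have := Real.add_one_le_exp (-0.05 : ℝ); linarith
  have hpow : (2.7182818283 : ℝ) ^ (6 : ℕ) ≤ Real.exp 1 ^ (6 : ℕ) :=
    pow_le_pow_left₀ (by norm_num) he1.le 6
  have h403 : (403 : ℝ) ≤ (2.7182818283 : ℝ) ^ (6 : ℕ) := by norm_num
  have hexp_big : (371 : ℝ) ≤ Real.exp 5.95 := by
    rw [hexp6]
    nlinarith [Real.exp_pos (-0.05 : ℝ)]
  have hr27 : r ≤ 0.0027 := by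
    have h1 : r ≤ Real.exp (-5.95) := by
      apply Real.exp_le_exp.2
      nlinarith
    have h2 : Real.exp (-5.95) ≤ 0.0027 := by
      rw [Real.exp_neg]
      have hinv : (Real.exp 5.95)⁻¹ ≤ (371 : ℝ)⁻¹ := by
        gcongr
      have : ((371 : ℝ))⁻¹ ≤ 0.0027 := by norm_num
      linarith
    linarith
  have hr1 : r < 1 := by linarith
  -- termwise bound
  set f : ℕ → ℂ := fun n => (ArithmeticFunction.sigma 1 (n + 1) : ℂ) *
      Complex.exp (2 * (Real.pi : ℂ) * Complex.I * ((n : ℂ) + 1) * z) with hfdef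
  set g : ℕ → ℝ := fun n => ((n : ℝ) + 1) ^ 2 * r ^ (n + 1) with hgdef
  have habsexp : ∀ n : ℕ, ‖(Complex.exp
      (2 * (Real.pi : ℂ) * Complex.I * ((n : ℂ) + 1) * z))‖ = r ^ (n + 1) := by
    intro n
    rw [Complex.norm_exp]
    have hre : (2 * (Real.pi : ℂ) * Complex.I * ((n : ℂ) + 1) * z).re
        = ((n : ℝ) + 1) * (-(2 * Real.pi * z.im)) := by
      simp [Complex.mul_re, Complex.mul_im]
      ring
    rw [hre]
    rw [show ((n : ℝ) + 1) = ((n + 1 : ℕ) : ℝ) by push_cast; ring, Real.exp_nat_mul]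
  have hbound : ∀ n : ℕ, ‖f n‖ ≤ g n := by
    intro n
    have h1 : (ArithmeticFunction.sigma 1 (n + 1) : ℝ) ≤ ((n : ℝ) + 1) ^ 2 := by
      have h0 : ((ArithmeticFunction.sigma 1 (n + 1) : ℕ) : ℝ)
          ≤ (((n + 1) * (n + 1) : ℕ) : ℝ) := Nat.cast_le.mpr (sigma_le_sq (n + 1))
      push_cast at h0 ⊢
      nlinarith [h0]
    have h2 : (0 : ℝ) ≤ r ^ (n + 1) := by positivity
    have h3 : ‖f n‖ = (ArithmeticFunction.sigma 1 (n + 1) : ℝ) * r ^ (n + 1) := by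
      rw [hfdef]
      simp only [norm_mul, Complex.norm_natCast, habsexp n]
    rw [h3]
    show (ArithmeticFunction.sigma 1 (n + 1) : ℝ) * r ^ (n + 1)
        ≤ ((n : ℝ) + 1) ^ 2 * r ^ (n + 1)
    exact mul_le_mul_of_nonneg_right h1 h2
  -- summability of g
  have hgs : Summable g := by
    have hs : Summable fun m : ℕ => (m : ℝ) ^ 2 * r ^ m :=
      summable_pow_mul_geometric_of_norm_lt_one 2
        (by rw [Real.norm_eq_abs, abs_of_pos hr0]; exact hr1)
    have hss := (summable_nat_add_iff 1).2 hs
    apply hss.congr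
    intro n
    push_cast
    ring
  -- geometric bound on tail
  have h2r1 : 2 * r < 1 := by linarith
  have h2r0 : (0 : ℝ) ≤ 2 * r := by linarith
  have hgeo : Summable fun n : ℕ => (2 * r) ^ n := summable_geometric_of_lt_one h2r0 h2r1
  have htail : ∑' n : ℕ, g (n + 1) ≤ 8 * r ^ 2 * (1 - 2 * r)⁻¹ := by
    have hb : ∀ n : ℕ, g (n + 1) ≤ 8 * r ^ 2 * (2 * r) ^ n := by
      intro n
      have hsq := sq_le_pow n
      have hrp : (0 : ℝ) ≤ r ^ n := by positivity
      calc g (n + 1) = ((n : ℝ) + 2) ^ 2 * (r ^ n * r ^ 2) := by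
            rw [hgdef]; push_cast; ring
        _ ≤ (8 * 2 ^ n) * (r ^ n * r ^ 2) :=
            mul_le_mul_of_nonneg_right hsq (by positivity)
        _ = 8 * r ^ 2 * (2 * r) ^ n := by rw [mul_pow]; ring
    calc ∑' n : ℕ, g (n + 1) ≤ ∑' n : ℕ, 8 * r ^ 2 * (2 * r) ^ n :=
          Summable.tsum_le_tsum hb ((summable_nat_add_iff 1).2 hgs) (hgeo.mul_left _)
      _ = 8 * r ^ 2 * (1 - 2 * r)⁻¹ := by
          rw [tsum_mul_left, tsum_geometric_of_lt_one h2r0 h2r1]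
  have hgsum : ∑' n, g n ≤ r + 8 * r ^ 2 * (1 - 2 * r)⁻¹ := by
    rw [Summable.tsum_eq_zero_add hgs]
    have hg0 : g 0 = r := by rw [hgdef]; norm_num
    linarith [htail]
  have hS : ‖∑' n, f n‖ ≤ r + 8 * r ^ 2 * (1 - 2 * r)⁻¹ :=
    le_trans (tsum_of_norm_bounded hgs.hasSum hbound) hgsum
  -- numeric conclusion
  have hinv : (1 - 2 * r)⁻¹ ≤ (0.99 : ℝ)⁻¹ :=
    inv_anti₀ (by norm_num) (by linarith)
  have hinvpos : (0 : ℝ) < (1 - 2 * r)⁻¹ := by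
    apply inv_pos.2; linarith
  have hr2 : r ^ 2 ≤ (0.0027 : ℝ) ^ 2 := by nlinarith
  have hSnum : ‖∑' n, f n‖ ≤ 0.0029 := by
    have h8 : 8 * r ^ 2 * (1 - 2 * r)⁻¹ ≤ 8 * (0.0027 : ℝ) ^ 2 * (0.99 : ℝ)⁻¹ := by
      have h0 : (0:ℝ) ≤ 8 * r ^ 2 := by positivity
      calc 8 * r ^ 2 * (1 - 2 * r)⁻¹ ≤ 8 * r ^ 2 * (0.99 : ℝ)⁻¹ := by
            exact mul_le_mul_of_nonneg_left hinv h0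
        _ ≤ 8 * (0.0027 : ℝ) ^ 2 * (0.99 : ℝ)⁻¹ := by
            apply mul_le_mul_of_nonneg_right _ (by norm_num)
            linarith
    have hnum : (0.0027 : ℝ) + 8 * (0.0027 : ℝ) ^ 2 * (0.99 : ℝ)⁻¹ ≤ 0.0029 := by norm_num
    linarith [hS]
  have hfinal : ‖E₂ z - 1‖ ≤ 0.07 := by
    have hE : E₂ z - 1 = -24 * ∑' n, f n := by
      rw [E₂, hfdef]; ring
    rw [hE, norm_mul]
    have h24 : ‖(-24 : ℂ)‖ = 24 := by
      rw [norm_neg]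
      exact Complex.norm_ofNat 24
    rw [h24]
    have hnorm : ‖∑' n, f n‖ = ‖∑' n, f n‖ := rfl
    rw [hnorm]
    linarith [hSnum]
  refine ⟨hfinal, ?_⟩
  intro hE0
  rw [hE0] at hfinal
  simp at hfinal
  linarith
end
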